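/- arXiv:2508.20897 — 2 statements merged into one kernel-verified Lean document; each statement's English description precedes it below -/
import Mathlib

section
/- Let Q_i (i = 1,…,m) be symmetric n×n matrices and suppose there exist γ₁,…,γ_m ≥ 0 with Σ γᵢ Qᵢ positive definite. Then the set {(x, X) : (1/2)trace(QᵢX) + cᵢᵀx ≤ bᵢ for all i, X ⪰ x xᵀ} has bounded projection onto the x-coordinates. In particular, each coordinate function x ↦ x_j attains finite infimum and supremum over this set. -/
open Matrix

-- aux
lemma trace_mul_psd_nonneg {n : ℕ} {A S : Matrix (Fin n) (Fin n) ℝ}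
    (hA : A.PosSemidef) (hS : S.PosSemidef) : 0 ≤ (A * S).trace := by
  obtain ⟨B, rfl⟩ : ∃ B : Matrix (Fin n) (Fin n) ℝ, A = Bᴴ * B := by
    open scoped MatrixOrder in exact CStarAlgebra.nonneg_iff_eq_star_mul_self.mp hA.nonneg
  obtain ⟨C, rfl⟩ : ∃ C : Matrix (Fin n) (Fin n) ℝ, S = Cᴴ * C := by
    open scoped MatrixOrder in exact CStarAlgebra.nonneg_iff_eq_star_mul_self.mp hS.nonneg
  have h1 : (Bᴴ * B * (Cᴴ * C)).trace = ((C * Bᴴ) * (C * Bᴴ)ᴴ).trace := by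
    rw [conjTranspose_mul, conjTranspose_conjTranspose]
    rw [show Bᴴ * B * (Cᴴ * C) = (Bᴴ * (B * Cᴴ)) * C by noncomm_ring]
    rw [Matrix.trace_mul_comm]
    noncomm_ring
  rw [h1]
  have : ((C * Bᴴ) * (C * Bᴴ)ᴴ).trace = ∑ i, ∑ j, ((C * Bᴴ) i j)^2 := by
    simp only [Matrix.trace, Matrix.mul_apply, Matrix.diag, conjTranspose_apply, sq,
      RCLike.star_def, starRingEnd_apply, star_trivial]
  rw [this]
  positivity

lemma trace_mul_vecMulVec {n : ℕ} (A : Matrix (Fin n) (Fin n) ℝ) (x : Fin n → ℝ) :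
    (A * Matrix.vecMulVec x x).trace = x ⬝ᵥ (A *ᵥ x) := by
  simp only [Matrix.trace, Matrix.mul_apply, Matrix.diag, Matrix.vecMulVec_apply,
    dotProduct, Matrix.mulVec, Finset.mul_sum]
  congr 1; ext i; congr 1; ext j; ring

lemma dotProduct_self_nonneg' {n : ℕ} (x : Fin n → ℝ) : 0 ≤ x ⬝ᵥ x := by
  simp only [dotProduct, ← sq]; positivity

lemma posdef_coercive {n : ℕ} {A : Matrix (Fin n) (Fin n) ℝ} (hA : A.PosDef) :
    ∃ α > 0, ∀ x : Fin n → ℝ, α * (x ⬝ᵥ x) ≤ x ⬝ᵥ A *ᵥ x := by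
  by_cases hn : n = 0
  · subst hn
    refine ⟨1, one_pos, fun x => ?_⟩
    simp [dotProduct]
  · haveI : Nonempty (Fin n) := ⟨⟨0, Nat.pos_of_ne_zero hn⟩⟩
    set f : (Fin n → ℝ) → ℝ := fun x => x ⬝ᵥ A *ᵥ x with hfdef
    have hf : Continuous f := by
      have : f = fun x => ∑ i, x i * ∑ j, A i j * x j := rfl
      rw [this]
      apply continuous_finset_sum; intro i _
      exact (continuous_apply i).mul
        (continuous_finset_sum _ fun j _ => continuous_const.mul (continuous_apply j))
    have hS : IsCompact (Metric.sphere (0 : EuclideanSpace ℝ (Fin n)) 1) :=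
      isCompact_sphere 0 1
    have hSne : (Metric.sphere (0 : EuclideanSpace ℝ (Fin n)) 1).Nonempty :=
      NormedSpace.sphere_nonempty.mpr zero_le_one
    have hfc : ContinuousOn (fun y : EuclideanSpace ℝ (Fin n) => f y)
        (Metric.sphere 0 1) :=
      (hf.comp (PiLp.continuous_ofLp 2 fun _ : Fin n => ℝ)).continuousOn
    obtain ⟨y₀, hy₀S, hy₀min⟩ := hS.exists_isMinOn hSne hfc
    have hy₀ne : (y₀ : Fin n → ℝ) ≠ 0 := by
      intro h
      have : ‖y₀‖ = 1 := by simpa using hy₀S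
      rw [show y₀ = 0 from WithLp.ofLp_injective 2 h] at this
      simp at this
    have hα : 0 < f y₀ := by
      have := hA.re_dotProduct_pos (x := y₀) hy₀ne
      simpa [hfdef] using this
    refine ⟨f y₀, hα, fun x => ?_⟩
    by_cases hx : x = 0
    · simp [hx, hfdef, dotProduct]
    · set r : ℝ := Real.sqrt (x ⬝ᵥ x) with hr
      have hxx : 0 < x ⬝ᵥ x := by
        rcases (dotProduct_self_nonneg' x).lt_or_eq with h | h
        · exact h
        · exfalso; apply hx; funext i
          have h2 : ∑ i, x i ^ 2 = 0 := by
            simpa [dotProduct, sq] using h.symm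
          have := (Finset.sum_eq_zero_iff_of_nonneg
            (fun i _ => sq_nonneg (x i))).mp h2 i (Finset.mem_univ i)
          exact pow_eq_zero_iff two_ne_zero |>.mp this
      have hrpos : 0 < r := Real.sqrt_pos.mpr hxx
      set xe : EuclideanSpace ℝ (Fin n) := (WithLp.equiv 2 (Fin n → ℝ)).symm x with hxe
      set y : EuclideanSpace ℝ (Fin n) := r⁻¹ • xe with hy
      have hynorm : y ∈ Metric.sphere (0 : EuclideanSpace ℝ (Fin n)) 1 := by
        simp only [Metric.mem_sphere, dist_zero_right, hy, norm_smul]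
        have : ‖xe‖ = r := by
          rw [EuclideanSpace.norm_eq, hr]
          congr 1
          simp [dotProduct, sq, Real.norm_eq_abs, sq_abs, hxe]
        rw [this, norm_inv, Real.norm_eq_abs, abs_of_pos hrpos,
          inv_mul_cancel₀ hrpos.ne']
      have hmin := hy₀min hynorm
      have hfy : f y = r⁻¹ * r⁻¹ * f x := by
        simp only [hfdef]
        show (r⁻¹ • x) ⬝ᵥ A *ᵥ (r⁻¹ • x) = r⁻¹ * r⁻¹ * (x ⬝ᵥ A *ᵥ x)
        rw [Matrix.mulVec_smul, smul_dotProduct, dotProduct_smul]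
        simp [smul_eq_mul]; ring
      have hr2 : r * r = x ⬝ᵥ x := Real.mul_self_sqrt (dotProduct_self_nonneg' x)
      have : f y₀ ≤ r⁻¹ * r⁻¹ * f x := by rw [← hfy]; exact hmin
      calc f y₀ * (x ⬝ᵥ x) = f y₀ * (r * r) := by rw [hr2]
        _ ≤ (r⁻¹ * r⁻¹ * f x) * (r * r) := by
            apply mul_le_mul_of_nonneg_right this (by positivity)
        _ = f x := by field_simp

/-- If some nonnegative combination of the constraint matrices is positive
definite, the SDP relaxation feasible set has bounded projection onto the
`x`-coordinates; in particular each coordinate function has finite infimum and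
supremum over this set. -/
theorem sdp_relaxation_bounded_projection {n m : ℕ}
    (Q : Fin m → Matrix (Fin n) (Fin n) ℝ) (hQsym : ∀ i, (Q i).IsSymm)
    (c : Fin m → Fin n → ℝ) (b : Fin m → ℝ)
    (γ : Fin m → ℝ) (hγ : ∀ i, 0 ≤ γ i)
    (hpd : (∑ i, γ i • Q i).PosDef) :
    (∃ M : ℝ, ∀ (x : Fin n → ℝ) (X : Matrix (Fin n) (Fin n) ℝ),
      (∀ i, (1 / 2) * (Q i * X).trace + c i ⬝ᵥ x ≤ b i) →
      (X - Matrix.vecMulVec x x).PosSemidef →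
      ∀ j, |x j| ≤ M) ∧
    ∀ j : Fin n,
      BddBelow ((fun p : (Fin n → ℝ) × Matrix (Fin n) (Fin n) ℝ => p.1 j) ''
        {p | (∀ i, (1 / 2) * (Q i * p.2).trace + c i ⬝ᵥ p.1 ≤ b i) ∧
          (p.2 - Matrix.vecMulVec p.1 p.1).PosSemidef}) ∧
      BddAbove ((fun p : (Fin n → ℝ) × Matrix (Fin n) (Fin n) ℝ => p.1 j) ''
        {p | (∀ i, (1 / 2) * (Q i * p.2).trace + c i ⬝ᵥ p.1 ≤ b i) ∧
          (p.2 - Matrix.vecMulVec p.1 p.1).PosSemidef}) := by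
  obtain ⟨α, hα, hco⟩ := posdef_coercive hpd
  set A : Matrix (Fin n) (Fin n) ℝ := ∑ i, γ i • Q i with hA
  set d : Fin n → ℝ := ∑ i, γ i • c i with hd
  set B : ℝ := ∑ i, γ i * b i with hB
  set D : ℝ := Real.sqrt (d ⬝ᵥ d) with hD
  set K : ℝ := max B 0 with hK
  set M : ℝ := 2 * (K + D + 1) / α + 1 with hM
  have hDnn : 0 ≤ D := Real.sqrt_nonneg _
  have hKnn : 0 ≤ K := le_max_right _ _
  have key : ∀ (x : Fin n → ℝ) (X : Matrix (Fin n) (Fin n) ℝ),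
      (∀ i, (1 / 2) * (Q i * X).trace + c i ⬝ᵥ x ≤ b i) →
      (X - Matrix.vecMulVec x x).PosSemidef → ∀ j, |x j| ≤ M := by
    intro x X hcon hpsd j
    -- aggregate the constraints
    have h1 : (1 / 2) * (A * X).trace + d ⬝ᵥ x ≤ B := by
      have hsum : ∑ i, γ i * ((1 / 2) * (Q i * X).trace + c i ⬝ᵥ x) ≤ ∑ i, γ i * b i :=
        Finset.sum_le_sum fun i _ => mul_le_mul_of_nonneg_left (hcon i) (hγ i)
      have hAX : (A * X).trace = ∑ i, γ i * (Q i * X).trace := by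
        rw [hA, Finset.sum_mul, Matrix.trace_sum]
        simp [Matrix.smul_mul, Matrix.trace_smul, smul_eq_mul]
      have hdx : d ⬝ᵥ x = ∑ i, γ i * (c i ⬝ᵥ x) := by
        rw [hd]
        simp only [dotProduct, Finset.sum_apply, Pi.smul_apply, smul_eq_mul,
          Finset.sum_mul, Finset.mul_sum]
        rw [Finset.sum_comm]
        exact Finset.sum_congr rfl fun i _ => Finset.sum_congr rfl fun k _ => by ring
      rw [hAX, hdx, hB]
      calc (1 / 2) * (∑ i, γ i * (Q i * X).trace) + ∑ i, γ i * (c i ⬝ᵥ x)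
          = ∑ i, γ i * ((1 / 2) * (Q i * X).trace + c i ⬝ᵥ x) := by
            rw [Finset.mul_sum, ← Finset.sum_add_distrib]
            congr 1; ext i; ring
        _ ≤ ∑ i, γ i * b i := hsum
    -- trace bound via psd
    have h2 : x ⬝ᵥ A *ᵥ x ≤ (A * X).trace := by
      have h0 : 0 ≤ (A * (X - Matrix.vecMulVec x x)).trace :=
        trace_mul_psd_nonneg hpd.posSemidef hpsd
      rw [Matrix.mul_sub, Matrix.trace_sub, trace_mul_vecMulVec] at h0
      linarith
    -- Cauchy-Schwarz
    set r : ℝ := Real.sqrt (x ⬝ᵥ x) with hr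
    have hrnn : 0 ≤ r := Real.sqrt_nonneg _
    have hr2 : r * r = x ⬝ᵥ x := Real.mul_self_sqrt (dotProduct_self_nonneg' x)
    have hcs : -(d ⬝ᵥ x) ≤ D * r := by
      have h3 : (d ⬝ᵥ x) ^ 2 ≤ (d ⬝ᵥ d) * (x ⬝ᵥ x) := by
        have := Finset.sum_mul_sq_le_sq_mul_sq Finset.univ d x
        simpa [dotProduct, sq] using this
      have h4 : |d ⬝ᵥ x| ≤ D * r := by
        rw [← Real.sqrt_sq_eq_abs, hD, hr, ← Real.sqrt_mul (dotProduct_self_nonneg' d)]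
        exact Real.sqrt_le_sqrt h3
      linarith [neg_abs_le (d ⬝ᵥ x)]
    have h5 : α * (r * r) ≤ 2 * K + 2 * (D * r) := by
      have := hco x
      rw [← hr2] at this
      have hBK : B ≤ K := le_max_left _ _
      nlinarith
    have hrM : r ≤ M := by
      by_contra hcon'
      push_neg at hcon'
      have h6 : 2 * (K + D + 1) / α < r - 1 := by
        rw [hM] at hcon'; linarith
      have h7 : 2 * (K + D + 1) < α * (r - 1) := by
        rw [div_lt_iff₀ hα] at h6; linarith [mul_comm α (r - 1)]
      have hr1 : 1 < r := by
        nlinarith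
      nlinarith
    have hxj : |x j| ≤ r := by
      rw [← Real.sqrt_sq_eq_abs, hr]
      apply Real.sqrt_le_sqrt
      have : x ⬝ᵥ x = ∑ i, (x i) ^ 2 := by simp [dotProduct, sq]
      rw [this]
      exact Finset.single_le_sum (fun i _ => sq_nonneg (x i)) (Finset.mem_univ j)
    exact hxj.trans hrM
  refine ⟨⟨M, key⟩, fun j => ⟨⟨-M, ?_⟩, ⟨M, ?_⟩⟩⟩
  · rintro v ⟨p, ⟨hp1, hp2⟩, rfl⟩
    have := key p.1 p.2 hp1 hp2 j
    linarith [abs_le.mp this |>.1]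
  · rintro v ⟨p, ⟨hp1, hp2⟩, rfl⟩
    have := key p.1 p.2 hp1 hp2 j
    linarith [abs_le.mp this |>.2]
end

section
/- Suppose a₁ ∈ ℝⁿ is nonzero and d₁ ∈ ℝ. Then there is no pair (x, X) with X − x xᵀ positive definite satisfying trace((a₁a₁ᵀ)X) − 2d₁a₁ᵀx + d₁² = 0. In other words, the constraint (a₁a₁ᵀ)·X − 2d₁ a₁ᵀx + d₁² = 0 together with X ≻ x xᵀ is infeasible. -/
open Matrix

lemma trace_vecMulVec_mul {n : ℕ} (a : Fin n → ℝ) (X : Matrix (Fin n) (Fin n) ℝ) :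
    (Matrix.vecMulVec a a * X).trace = a ⬝ᵥ (X *ᵥ a) := by
  simp only [Matrix.trace, Matrix.diag, Matrix.mul_apply, Matrix.vecMulVec_apply,
    dotProduct, Matrix.mulVec, Finset.mul_sum]
  rw [Finset.sum_comm]
  congr 1; ext i; congr 1; ext j; ring

lemma dot_vecMulVec {n : ℕ} (a x : Fin n → ℝ) :
    a ⬝ᵥ ((Matrix.vecMulVec x x) *ᵥ a) = (a ⬝ᵥ x) ^ 2 := by
  simp only [dotProduct, Matrix.mulVec, Matrix.vecMulVec_apply, Finset.mul_sum]
  rw [sq, Finset.sum_mul_sum]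
  congr 1; ext i; congr 1; ext j; ring

/-- The squared-equality cut together with `X ≻ x xᵀ` is infeasible: the
SDP+RLT relaxation with the squared linear equality constraints has no strictly
feasible point. -/
theorem no_strictly_feasible_point {n : ℕ} (a : Fin n → ℝ) (ha : a ≠ 0)
    (d : ℝ) :
    ¬ ∃ (x : Fin n → ℝ) (X : Matrix (Fin n) (Fin n) ℝ),
      (X - Matrix.vecMulVec x x).PosDef ∧
      (Matrix.vecMulVec a a * X).trace - 2 * d * (a ⬝ᵥ x) + d ^ 2 = 0 := by
  rintro ⟨x, X, hpd, heq⟩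
  have hq := hpd.dotProduct_mulVec_pos ha
  simp only [star_trivial] at hq
  have hmv : (X - Matrix.vecMulVec x x) *ᵥ a = X *ᵥ a - (Matrix.vecMulVec x x) *ᵥ a :=
    Matrix.sub_mulVec _ _ _
  rw [hmv, dotProduct_sub, dot_vecMulVec] at hq
  rw [trace_vecMulVec_mul] at heq
  nlinarith [sq_nonneg (a ⬝ᵥ x - d)]
end
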